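/- Fix positive conductances (C_k)_{k≥0} assigned by age. Then for every n ≥ 1, the map A ↦ CAP(A) on subsets of 𝕃₀⁽ⁿ⁾ (with CAP(∅) = 0) is a monotone clustering function: it is invariant under graph-isomorphisms of the generated subtrees, A ≺ B implies CAP(A) ≤ CAP(B) for all A,B with |A| = |B|, and CAP(A∪B) ≤ CAP(A) + CAP(B) for all disjoint A,B ⊆ 𝕃₀⁽ⁿ⁾. -/

import Mathlib

open Filter
open scoped Classical

noncomputable section

namespace PWC

/-- Leaves of the binary tree `𝕋⁽ⁿ⁾` of depth `n`: binary words of length `n`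
(coordinate `0` is the first step away from the root). -/
abbrev Leaf (n : ℕ) := Fin n → Bool

/-- The age (distance from the leaves) of the youngest common ancestor `u ∧ v` of two
leaves: `n` minus the length of their longest common prefix. -/
def meetAge {n : ℕ} (u v : Leaf n) : ℕ :=
  if u = v then 0 else n - sInf {i : ℕ | ∃ h : i < n, u ⟨i, h⟩ ≠ v ⟨i, h⟩}

/-- Canonical representative (as a leaf) of the ancestor of `u` at age `k`:
keep the first `n - k` coordinates and pad by `false`. -/
def trunc {n : ℕ} (k : ℕ) (u : Leaf n) : Leaf n :=
  fun i => if (i : ℕ) < n - k then u i else false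

/-- The branching points `ℬ(A) ∩ 𝕃_k` of `A` of age `k`, encoded by the canonical
representatives of the corresponding ancestors. -/
def branchPts {n : ℕ} (A : Finset (Leaf n)) (k : ℕ) : Finset (Leaf n) :=
  ((A ×ˢ A).filter (fun p => meetAge p.1 p.2 = k)).image (fun p => trunc k p.1)

/-- `b_k(A)`: the number of branching points of `A` of age `k`. -/
def bcount {n : ℕ} (A : Finset (Leaf n)) (k : ℕ) : ℕ := (branchPts A k).card

/-- `b_{k,ℓ}(A)`: the number of branching points of `A` of age `ℓ` whose direct
branching ancestor has age `k`; for `k = n+1` the indicator that the oldest branching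
point of `A` has age `ℓ` (i.e. the branching points at age `ℓ` having no strictly older
branching ancestor). -/
def b2count {n : ℕ} (A : Finset (Leaf n)) (k l : ℕ) : ℕ :=
  if k = n + 1 then
    ((branchPts A l).filter (fun w => ∀ j, l < j → j ≤ n → trunc j w ∉ branchPts A j)).card
  else
    ((branchPts A l).filter (fun w => trunc k w ∈ branchPts A k ∧
      ∀ j, l < j → j < k → trunc j w ∉ branchPts A j)).card

/-- `A ≺ B` : `A` is more clustered than `B`. -/
def MoreClustered {n : ℕ} (A B : Finset (Leaf n)) : Prop :=
  ∃ σ : Leaf n → Leaf n, Set.BijOn σ ↑A ↑B ∧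
    ∀ u ∈ A, ∀ v ∈ A, meetAge u v ≤ meetAge (σ u) (σ v)

/-- `A ∼ B` : the subtrees of `𝕋⁽ⁿ⁾` generated by `A` and `B` are graph-isomorphic,
i.e. there is a bijection of the leaf sets preserving all meet ages. -/
def EquivClustered {n : ℕ} (A B : Finset (Leaf n)) : Prop :=
  ∃ σ : Leaf n → Leaf n, Set.BijOn σ ↑A ↑B ∧
    ∀ u ∈ A, ∀ v ∈ A, meetAge (σ u) (σ v) = meetAge u v

/-- A clustering function: vanishes on `∅` and is invariant under isomorphism of the
generated subtrees. -/
def IsClusteringFn {n : ℕ} (Φ : Finset (Leaf n) → ℝ) : Prop :=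
  Φ ∅ = 0 ∧ ∀ A B : Finset (Leaf n), EquivClustered A B → Φ A = Φ B

/-- A monotone clustering function. -/
def IsMonotoneClusteringFn {n : ℕ} (Φ : Finset (Leaf n) → ℝ) : Prop :=
  IsClusteringFn Φ ∧
    (∀ A B : Finset (Leaf n), MoreClustered A B → Φ A ≤ Φ B) ∧
    (∀ A B : Finset (Leaf n), Disjoint A B → Φ (A ∪ B) ≤ Φ A + Φ B)

/-- The partition function `Z_n^{Φ,J}`. -/
def Z (n : ℕ) (Φ : Finset (Leaf n) → ℝ) (J : ℝ) : ℝ :=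
  ∑ A : Finset (Leaf n), Real.exp (J * (A.card : ℝ) - Φ A)

/-- The finite-volume free energy `ζ_n^Φ(J) = 2⁻ⁿ ln Z_n^{Φ,J}`. -/
def zetaN (n : ℕ) (Φ : Finset (Leaf n) → ℝ) (J : ℝ) : ℝ :=
  Real.log (Z n Φ J) / 2 ^ n

/-- The canonical partition function `W_n^Φ(a₀)`. -/
def W (n : ℕ) (Φ : Finset (Leaf n) → ℝ) (a₀ : ℕ) : ℝ :=
  ∑ A ∈ Finset.univ.filter (fun A : Finset (Leaf n) => A.card = a₀), Real.exp (-Φ A)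

/-- The finite-volume canonical free energy `ω_n^Φ(ε) = 2⁻ⁿ ln W_n^Φ(ε 2ⁿ)` (for a
dyadic `ε ∈ [0,1]` and `n` large, `⌊ε 2ⁿ⌋ = ε 2ⁿ`). -/
def omegaN (n : ℕ) (Φ : Finset (Leaf n) → ℝ) (ε : ℝ) : ℝ :=
  Real.log (W n Φ ⌊ε * 2 ^ n⌋₊) / 2 ^ n

/-- The expected density `ρ_n^Φ(J)` of the dry set under the PWC measure. -/
def rhoN (n : ℕ) (Φ : Finset (Leaf n) → ℝ) (J : ℝ) : ℝ :=
  (∑ A : Finset (Leaf n), (A.card : ℝ) * Real.exp (J * (A.card : ℝ) - Φ A)) /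
    (2 ^ n * Z n Φ J)

/-- A dyadic rational. -/
def IsDyadic (x : ℝ) : Prop := ∃ (k : ℤ) (m : ℕ), x = (k : ℝ) / 2 ^ m

/-- The hypotheses of the general theory (Proposition 1.2): each `Φ_n` (for `n ≥ 1`) is
a monotone, non-negative clustering function, and `Φ_n(A) ≤ Φ_{n-1}(A) + γ_n` for any
`A` contained in the leaf set of one of the two subtrees of `𝕋⁽ⁿ⁾` rooted at a child of
the root (identified with `𝕋⁽ⁿ⁻¹⁾` by prepending the corresponding letter), where
`γ_n ≥ 0` and `∑ γ_n 2⁻ⁿ < ∞`. -/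
structure GoodSeq (Φ : ∀ n, Finset (Fin n → Bool) → ℝ) (γ : ℕ → ℝ) : Prop where
  mono : ∀ n, 1 ≤ n → IsMonotoneClusteringFn (Φ n)
  nonneg : ∀ n, 1 ≤ n → ∀ A, 0 ≤ Φ n A
  gamma_nonneg : ∀ n, 0 ≤ γ n
  gamma_summable : Summable fun n => γ n / 2 ^ n
  subtree : ∀ (n : ℕ) (b : Bool) (A : Finset (Fin n → Bool)),
    Φ (n + 1) (A.image fun u => Fin.cons b u) ≤ Φ n A + γ (n + 1)

/-- The first order branching clustering function with parameters `(h_k)_{k=0}^n`, `h`. -/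
def foPhi (n : ℕ) (hs : ℕ → ℝ) (h : ℝ) (A : Finset (Leaf n)) : ℝ :=
  if A = ∅ then 0 else (∑ k ∈ Finset.range (n + 1), hs k * (bcount A k : ℝ)) + h

/-- The second order branching clustering function with parameters
`(h_{k,ℓ})_{0 ≤ ℓ < k ≤ n+1}`, `h`. -/
def soPhi (n : ℕ) (H : ℕ → ℕ → ℝ) (h : ℝ) (A : Finset (Leaf n)) : ℝ :=
  if A = ∅ then 0
  else (∑ k ∈ Finset.range (n + 2), ∑ l ∈ Finset.range k, H k l * (b2count A k l : ℝ)) + h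

/-- A non-decreasing (infinite) triangular array. -/
def ArrayMono (H : ℕ → ℕ → ℝ) : Prop :=
  ∀ k k' l l' : ℕ, l < k → l' < k' → k ≤ k' → l ≤ l' → H k l ≤ H k' l'

/-- The Dirichlet energy on `𝕋⁽ⁿ⁾` of `f` (vertices encoded as words of length `≤ n`,
read from the root; a vertex of length `m` has age `n - m` and its parent edge has
conductance `C (n - m)`). -/
def energy (n : ℕ) (C : ℕ → ℝ) (f : List Bool → ℝ) : ℝ :=
  ∑ m ∈ Finset.Icc 1 n, ∑ v : Fin m → Bool,
    C (n - m) * (f (List.ofFn v) - f (List.ofFn v).dropLast) ^ 2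

/-- The capacity of a set of leaves `A ⊆ 𝕃₀⁽ⁿ⁾`. -/
def cap (n : ℕ) (C : ℕ → ℝ) (A : Finset (Leaf n)) : ℝ :=
  sInf {x : ℝ | ∃ f : List Bool → ℝ, f [] = 1 ∧ (∀ u ∈ A, f (List.ofFn u) = 0) ∧
    x = energy n C f}




def ser (c x : ℝ) : ℝ := c * x / (c + x)

lemma ser_nonneg {c x : ℝ} (hc : 0 < c) (hx : 0 ≤ x) : 0 ≤ ser c x := by
  unfold ser; positivity

lemma ser_zero (c : ℝ) : ser c 0 = 0 := by simp [ser]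

lemma ser_mono {c x y : ℝ} (hc : 0 < c) (hx : 0 ≤ x) (hxy : x ≤ y) :
    ser c x ≤ ser c y := by
  unfold ser
  rw [div_le_div_iff₀ (by linarith) (by linarith)]
  nlinarith [mul_le_mul_of_nonneg_left hxy (mul_pos hc hc).le]

lemma ser_subadd {c x y : ℝ} (hc : 0 < c) (hx : 0 ≤ x) (hy : 0 ≤ y) :
    ser c (x + y) ≤ ser c x + ser c y := by
  unfold ser
  rw [div_add_div _ _ (by positivity) (by positivity), div_le_div_iff₀ (by linarith) (by positivity)]
  nlinarith [mul_nonneg hx hy, sq_nonneg c, mul_pos hc hc, mul_nonneg (mul_nonneg hx hy) hc.le, mul_nonneg (mul_nonneg hx hy) (add_nonneg hx hy)]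

def btail {n : ℕ} (b : Bool) (A : Finset (Leaf (n+1))) : Finset (Leaf n) :=
  (A.filter (fun u => u 0 = b)).image Fin.tail

lemma mem_btail {n : ℕ} {b : Bool} {A : Finset (Leaf (n+1))} {w : Leaf n} :
    w ∈ btail b A ↔ Fin.cons b w ∈ A := by
  constructor
  · rintro hw
    simp only [btail, Finset.mem_image, Finset.mem_filter] at hw
    obtain ⟨u, ⟨hu, hu0⟩, rfl⟩ := hw
    rwa [← hu0, Fin.cons_self_tail]
  · intro h
    refine Finset.mem_image.2 ⟨Fin.cons b w, Finset.mem_filter.2 ⟨h, by simp⟩, by simp⟩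

lemma btail_empty {n : ℕ} (b : Bool) : btail (n := n) b ∅ = ∅ := by
  ext w; simp [mem_btail]

lemma btail_union {n : ℕ} (b : Bool) (A B : Finset (Leaf (n+1))) :
    btail b (A ∪ B) = btail b A ∪ btail b B := by
  ext w; simp [mem_btail]

lemma btail_disjoint {n : ℕ} (b : Bool) {A B : Finset (Leaf (n+1))}
    (h : Disjoint A B) : Disjoint (btail b A) (btail b B) := by
  rw [Finset.disjoint_left] at h ⊢
  intro w hw hw'
  exact h (mem_btail.1 hw) (mem_btail.1 hw')

variable (C : ℕ → ℝ)

def R : (n : ℕ) → Finset (Leaf n) → ℝ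
  | 0, T => if T = ∅ then 0 else C 0
  | (n+1), T => ser (C (n+1)) (R n (btail false T) + R n (btail true T))

def Q (n : ℕ) (A : Finset (Leaf (n+1))) : ℝ :=
  R C n (btail false A) + R C n (btail true A)

lemma R_succ (n : ℕ) (T : Finset (Leaf (n+1))) :
    R C (n+1) T = ser (C (n+1)) (Q C n T) := rfl

variable {C}

lemma R_nonneg (hC : ∀ k, 0 < C k) : ∀ (n : ℕ) (T : Finset (Leaf n)), 0 ≤ R C n T := by
  intro n
  induction n with
  | zero => intro T; by_cases h : T = ∅ <;> simp [R, h, (hC 0).le]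
  | succ n ih => intro T; exact ser_nonneg (hC (n+1)) (add_nonneg (ih _) (ih _))

lemma Q_nonneg (hC : ∀ k, 0 < C k) (n : ℕ) (A : Finset (Leaf (n+1))) : 0 ≤ Q C n A :=
  add_nonneg (R_nonneg hC n _) (R_nonneg hC n _)

lemma R_empty : ∀ n : ℕ, R C (n := n) ∅ = 0 := by
  intro n
  induction n with
  | zero => simp [R]
  | succ n ih => simp [R, btail_empty, ih, ser_zero]

lemma Q_empty (n : ℕ) : Q C n ∅ = 0 := by
  simp [Q, btail_empty, R_empty]



lemma meetAge_self {n : ℕ} (u : Leaf n) : meetAge u u = 0 := by simp [meetAge]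

lemma meetAge_le {n : ℕ} (u v : Leaf n) : meetAge u v ≤ n := by
  unfold meetAge
  split
  · omega
  · exact Nat.sub_le _ _

lemma diffSet_nonempty {n : ℕ} {u v : Leaf n} (h : u ≠ v) :
    {i : ℕ | ∃ h : i < n, u ⟨i, h⟩ ≠ v ⟨i, h⟩}.Nonempty := by
  by_contra hne
  apply h
  funext i
  by_contra hiv
  exact hne ⟨i.1, i.2, by simpa using hiv⟩

lemma meetAge_head_ne {n : ℕ} {u v : Leaf (n+1)} (h : u 0 ≠ v 0) :
    meetAge u v = n + 1 := by
  have huv : u ≠ v := fun he => h (by rw [he])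
  have h0 : (0 : ℕ) ∈ {i : ℕ | ∃ h : i < n + 1, u ⟨i, h⟩ ≠ v ⟨i, h⟩} :=
    ⟨Nat.succ_pos n, by simpa using h⟩
  rw [meetAge, if_neg huv, Nat.sInf_eq_zero.2 (Or.inl h0)]
  omega

lemma meetAge_tail {n : ℕ} {u v : Leaf (n+1)} (hne : u ≠ v) (h0 : u 0 = v 0) :
    meetAge u v = meetAge (Fin.tail u) (Fin.tail v) := by
  have htne : Fin.tail u ≠ Fin.tail v := by
    intro ht
    apply hne
    have := Fin.cons_self_tail u
    rw [← Fin.cons_self_tail u, ← Fin.cons_self_tail v, h0, ht]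
  set S : Set ℕ := {i : ℕ | ∃ h : i < n + 1, u ⟨i, h⟩ ≠ v ⟨i, h⟩} with hS
  set S' : Set ℕ := {i : ℕ | ∃ h : i < n, Fin.tail u ⟨i, h⟩ ≠ Fin.tail v ⟨i, h⟩} with hS'
  have hmem : ∀ i : ℕ, i ∈ S ↔ ∃ j, i = j + 1 ∧ j ∈ S' := by
    intro i
    constructor
    · rintro ⟨hi, hne'⟩
      match i with
      | 0 => exact absurd (by simpa using h0) hne'
      | (j+1) =>
        refine ⟨j, rfl, Nat.lt_of_succ_lt_succ hi, ?_⟩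
        simpa [Fin.tail, Fin.succ_mk] using hne'
    · rintro ⟨j, rfl, hj, hne'⟩
      refine ⟨Nat.succ_lt_succ hj, ?_⟩
      simpa [Fin.tail, Fin.succ_mk] using hne'
  have hS'ne : S'.Nonempty := diffSet_nonempty htne
  have hSne : S.Nonempty := diffSet_nonempty hne
  have hinf : sInf S = sInf S' + 1 := by
    have h1 : sInf S' ∈ S' := Nat.sInf_mem hS'ne
    have h2 : sInf S' + 1 ∈ S := (hmem _).2 ⟨_, rfl, h1⟩
    have h3 : sInf S ∈ S := Nat.sInf_mem hSne
    obtain ⟨j, hj, hjS'⟩ := (hmem _).1 h3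
    have h4 : sInf S ≤ sInf S' + 1 := Nat.sInf_le h2
    have h5 : sInf S' ≤ j := Nat.sInf_le hjS'
    omega
  have hlt : sInf S' < n := by
    obtain ⟨hlt, _⟩ := Nat.sInf_mem hS'ne
    exact hlt
  rw [meetAge, if_neg hne, meetAge, if_neg htne, ← hS, ← hS', hinf]
  omega

lemma meetAge_head_eq_le {n : ℕ} {u v : Leaf (n+1)} (h0 : u 0 = v 0) :
    meetAge u v ≤ n := by
  by_cases hne : u = v
  · simp [hne, meetAge_self]
  · rw [meetAge_tail hne h0]; exact meetAge_le _ _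

lemma meetAge_cons {n : ℕ} (b : Bool) (w w' : Leaf n) :
    meetAge (Fin.cons b w) (Fin.cons b w') = meetAge w w' := by
  by_cases h : w = w'
  · simp [h, meetAge_self]
  · have hne : (Fin.cons b w : Leaf (n+1)) ≠ (Fin.cons b w' : Leaf (n+1)) := by
      intro he; apply h
      have := congrArg Fin.tail he
      simpa [Fin.tail_cons] using this
    rw [meetAge_tail hne (by simp), Fin.tail_cons, Fin.tail_cons]



lemma energy_nonneg {C : ℕ → ℝ} (hC : ∀ k, 0 < C k) (n : ℕ) (f : List Bool → ℝ) :
    0 ≤ energy n C f := by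
  apply Finset.sum_nonneg
  intro m _
  apply Finset.sum_nonneg
  intro v _
  exact mul_nonneg (hC _).le (sq_nonneg _)

lemma energy_zero (C : ℕ → ℝ) (f : List Bool → ℝ) : energy 0 C f = 0 := by
  simp [energy]

lemma energy_succ (n : ℕ) (C : ℕ → ℝ) (f : List Bool → ℝ) :
    energy (n+1) C f =
      ∑ b : Bool, (C n * (f [b] - f []) ^ 2 + energy n C (fun l => f (b :: l))) := by
  rw [Finset.sum_add_distrib]
  unfold energy
  have hins : Finset.Icc 1 (n+1) = insert 1 ((Finset.Icc 1 n).image (· + 1)) := by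
    ext m
    simp only [Finset.mem_Icc, Finset.mem_insert, Finset.mem_image]
    constructor
    · rintro ⟨h1, h2⟩
      match m with
      | 1 => exact Or.inl rfl
      | (m+2) => exact Or.inr ⟨m+1, ⟨by omega, by omega⟩, rfl⟩
    · rintro (rfl | ⟨k, ⟨hk1, hk2⟩, rfl⟩) <;> omega
  rw [hins, Finset.sum_insert (by
    simp only [Finset.mem_image, Finset.mem_Icc]
    rintro ⟨k, ⟨hk, _⟩, hk1⟩
    omega)]
  rw [Finset.sum_image (by intro a _ b _ h; exact Nat.succ_injective h)]
  have h1 : ∑ v : Fin 1 → Bool, C (n + 1 - 1) * (f (List.ofFn v) - f (List.ofFn v).dropLast) ^ 2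
      = ∑ b : Bool, C n * (f [b] - f []) ^ 2 := by
    rw [Fintype.sum_equiv (Equiv.funUnique (Fin 1) Bool) _
      (fun b => C n * (f [b] - f []) ^ 2)]
    intro v
    simp [List.ofFn_succ]
  have h2 : ∀ m, 1 ≤ m → (∑ v : Fin (m+1) → Bool,
        C (n + 1 - (m+1)) * (f (List.ofFn v) - f (List.ofFn v).dropLast) ^ 2)
      = ∑ b : Bool, ∑ w : Fin m → Bool,
        C (n - m) * (f (b :: List.ofFn w) - f (b :: (List.ofFn w).dropLast)) ^ 2 := by
    intro m hm
    have step1 : (∑ v : Fin (m+1) → Bool,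
        C (n + 1 - (m+1)) * (f (List.ofFn v) - f (List.ofFn v).dropLast) ^ 2)
        = ∑ p : Bool × (Fin m → Bool),
        C (n - m) * (f (p.1 :: List.ofFn p.2) - f (p.1 :: (List.ofFn p.2).dropLast)) ^ 2 := by
      apply Fintype.sum_equiv (Fin.consEquiv (fun _ : Fin (m+1) => Bool)).symm
      intro v
      have hofn : List.ofFn v = v 0 :: List.ofFn (Fin.tail v) := by
        rw [List.ofFn_succ]; rfl
      have hnil : List.ofFn (Fin.tail v) ≠ [] := by
        have : (List.ofFn (Fin.tail v)).length = m := List.length_ofFn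
        intro h; rw [h] at this; simp at this; omega
      have : n + 1 - (m + 1) = n - m := by omega
      rw [hofn, List.dropLast_cons_of_ne_nil hnil, this]
      rfl
    rw [step1]
    exact Fintype.sum_prod_type _
  rw [h1]
  rw [Finset.sum_congr rfl (fun m hm => h2 m (Finset.mem_Icc.1 hm).1), Finset.sum_comm]



lemma quad_lb {c x t s : ℝ} (hc : 0 < c) (hx : 0 ≤ x) :
    t ^ 2 * ser c x ≤ c * (s - t) ^ 2 + s ^ 2 * x := by
  have hcx : 0 < c + x := by linarith
  rw [ser, ← mul_div_assoc, div_le_iff₀ hcx]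
  nlinarith [sq_nonneg ((c + x) * s - c * t)]

lemma quad_eq {c x t : ℝ} (hc : 0 < c) (hx : 0 ≤ x) :
    c * (t * c / (c + x) - t) ^ 2 + (t * c / (c + x)) ^ 2 * x = t ^ 2 * ser c x := by
  have hcx : (c + x) ≠ 0 := by positivity
  rw [ser]
  field_simp
  ring

variable {C : ℕ → ℝ}

/-- Lower bound: any admissible function has energy at least `t² Q`. -/
lemma energy_lb (hC : ∀ k, 0 < C k) : ∀ (n : ℕ) (A : Finset (Leaf (n+1)))
    (f : List Bool → ℝ) (t : ℝ), f [] = t → (∀ u ∈ A, f (List.ofFn u) = 0) →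
    t ^ 2 * Q C n A ≤ energy (n+1) C f := by
  intro n
  induction n with
  | zero =>
    intro A f t hroot hvan
    rw [energy_succ]
    have key : ∀ b : Bool, t ^ 2 * R C 0 (btail b A) ≤
        C 0 * (f [b] - f []) ^ 2 + energy 0 C (fun l => f (b :: l)) := by
      intro b
      rw [energy_zero, add_zero, hroot]
      by_cases h : btail b A = ∅
      · rw [h, R_empty, mul_zero]
        exact mul_nonneg (hC 0).le (sq_nonneg _)
      · obtain ⟨w, hw⟩ := Finset.nonempty_iff_ne_empty.2 h
        have hcons : (Fin.cons b w : Leaf 1) ∈ A := mem_btail.1 hw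
        have : f [b] = 0 := by
          have := hvan _ hcons
          simpa [List.ofFn_succ] using this
        rw [this, R, if_neg h]
        nlinarith [hC 0, sq_nonneg t]
    calc t ^ 2 * Q C 0 A = ∑ b : Bool, t ^ 2 * R C 0 (btail b A) := by
          simp [Q]; ring
      _ ≤ _ := Finset.sum_le_sum (fun b _ => key b)
  | succ n ih =>
    intro A f t hroot hvan
    rw [energy_succ]
    have key : ∀ b : Bool, t ^ 2 * R C (n+1) (btail b A) ≤
        C (n+1) * (f [b] - f []) ^ 2 + energy (n+1) C (fun l => f (b :: l)) := by
      intro b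
      have hvan' : ∀ u ∈ btail b A, (fun l => f (b :: l)) (List.ofFn u) = 0 := by
        intro u hu
        have hcons : (Fin.cons b u : Leaf (n+2)) ∈ A := mem_btail.1 hu
        have := hvan _ hcons
        have hofn : List.ofFn (Fin.cons b u : Leaf (n+2)) = b :: List.ofFn u := by
          rw [List.ofFn_succ]; rfl
        rwa [hofn] at this
      have hsub := ih (btail b A) (fun l => f (b :: l)) (f [b]) rfl hvan'
      have := quad_lb (c := C (n+1)) (x := Q C n (btail b A)) (t := t) (s := f [b])
        (hC (n+1)) (Q_nonneg hC n _)
      rw [R_succ, hroot]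
      calc t ^ 2 * ser (C (n+1)) (Q C n (btail b A))
          ≤ C (n+1) * (f [b] - t) ^ 2 + f [b] ^ 2 * Q C n (btail b A) := this
        _ ≤ C (n+1) * (f [b] - t) ^ 2 + energy (n+1) C (fun l => f (b :: l)) := by
            linarith [hsub]
    calc t ^ 2 * Q C (n+1) A = ∑ b : Bool, t ^ 2 * R C (n+1) (btail b A) := by
          simp [Q]; ring
      _ ≤ _ := Finset.sum_le_sum (fun b _ => key b)

/-- Upper bound: there is an admissible function with energy exactly `t² Q`. -/
lemma energy_ub (hC : ∀ k, 0 < C k) : ∀ (n : ℕ) (A : Finset (Leaf (n+1))) (t : ℝ),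
    ∃ f : List Bool → ℝ, f [] = t ∧ (∀ u ∈ A, f (List.ofFn u) = 0) ∧
      energy (n+1) C f = t ^ 2 * Q C n A := by
  intro n
  induction n with
  | zero =>
    intro A t
    let f : List Bool → ℝ := fun l => match l with
      | [] => t
      | (b :: _) => if btail b A = ∅ then t else 0
    have hfnil : f [] = t := rfl
    have hfb : ∀ b : Bool, f [b] = if btail b A = ∅ then t else 0 := fun b => rfl
    refine ⟨f, rfl, ?_, ?_⟩
    · intro u hu
      have h1 : List.ofFn u = [u 0] := by
        rw [List.ofFn_succ]; rfl
      have htail : Fin.tail u ∈ btail (u 0) A := by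
        rw [mem_btail, Fin.cons_self_tail]; exact hu
      have hne : btail (u 0) A ≠ ∅ := fun h => by simp [h] at htail
      rw [h1, hfb, if_neg hne]
    · rw [energy_succ]
      have key : ∀ b : Bool, C 0 * (f [b] - f []) ^ 2 + energy 0 C (fun l => f (b :: l))
          = t ^ 2 * R C 0 (btail b A) := by
        intro b
        rw [energy_zero, add_zero, hfb b, hfnil]
        by_cases h : btail b A = ∅
        · rw [if_pos h, h, R_empty]; ring
        · rw [if_neg h, R, if_neg h]; ring
      rw [Finset.sum_congr rfl (fun b _ => key b)]
      simp [Q]; ring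
  | succ n ih =>
    intro A t
    have hcpos := hC (n+1)
    obtain ⟨f0, h0root, h0van, h0e⟩ := ih (btail false A)
      (t * C (n+1) / (C (n+1) + Q C n (btail false A)))
    obtain ⟨f1, h1root, h1van, h1e⟩ := ih (btail true A)
      (t * C (n+1) / (C (n+1) + Q C n (btail true A)))
    let f : List Bool → ℝ := fun l => match l with
      | [] => t
      | (false :: l') => f0 l'
      | (true :: l') => f1 l'
    have hfnil : f [] = t := rfl
    have hff : (fun l => f (false :: l)) = f0 := rfl
    have hft : (fun l => f (true :: l)) = f1 := rfl
    refine ⟨f, rfl, ?_, ?_⟩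
    · intro u hu
      have hofn : List.ofFn u = u 0 :: List.ofFn (Fin.tail u) := by
        rw [List.ofFn_succ]; rfl
      have htail : Fin.tail u ∈ btail (u 0) A := by
        rw [mem_btail, Fin.cons_self_tail]; exact hu
      rw [hofn]
      cases hb : u 0 with
      | false =>
        rw [hb] at htail
        exact h0van _ htail
      | true =>
        rw [hb] at htail
        exact h1van _ htail
    · rw [energy_succ]
      have key : ∀ b : Bool, C (n+1) * (f [b] - f []) ^ 2 +
          energy (n+1) C (fun l => f (b :: l)) = t ^ 2 * R C (n+1) (btail b A) := by
        intro b
        have hQb := Q_nonneg hC n (btail b A)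
        cases b with
        | false =>
          rw [hff, hfnil, h0e, R_succ]
          have : f [false] = t * C (n+1) / (C (n+1) + Q C n (btail false A)) := h0root
          rw [this, quad_eq hcpos (Q_nonneg hC n _)]
        | true =>
          rw [hft, hfnil, h1e, R_succ]
          have : f [true] = t * C (n+1) / (C (n+1) + Q C n (btail true A)) := h1root
          rw [this, quad_eq hcpos (Q_nonneg hC n _)]
      rw [Finset.sum_congr rfl (fun b _ => key b)]
      simp [Q]; ring

lemma cap_eq (hC : ∀ k, 0 < C k) (n : ℕ) (A : Finset (Leaf (n+1))) :
    cap (n+1) C A = Q C n A := by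
  apply le_antisymm
  · apply csInf_le
    · refine ⟨0, ?_⟩
      rintro x ⟨f, hf1, hf0, rfl⟩
      exact energy_nonneg hC _ _
    · obtain ⟨f, h1, h2, h3⟩ := energy_ub hC n A 1
      exact ⟨f, h1, h2, by rw [h3]; ring⟩
  · apply le_csInf
    · obtain ⟨f, h1, h2, h3⟩ := energy_ub hC n A 1
      exact ⟨_, f, h1, h2, rfl⟩
    · rintro x ⟨f, hf1, hf0, rfl⟩
      have := energy_lb hC n A f 1 hf1 hf0
      simpa using this

lemma R_subadd (hC : ∀ k, 0 < C k) : ∀ (n : ℕ) (T U : Finset (Leaf n)),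
    Disjoint T U → R C n (T ∪ U) ≤ R C n T + R C n U := by
  intro n
  induction n with
  | zero =>
    intro T U _
    by_cases hT : T = ∅
    · subst hT
      rw [Finset.empty_union, show R C 0 (∅ : Finset (Leaf 0)) = 0 from R_empty 0, zero_add]
    · by_cases hU : U = ∅
      · subst hU
        simp only [Finset.union_empty]
        rw [show R C 0 (∅ : Finset (Leaf 0)) = 0 from R_empty 0]
        simp
      · have : T ∪ U ≠ ∅ := fun h => hT (Finset.union_eq_empty.1 h).1
        rw [R, if_neg this, R, if_neg hT, R, if_neg hU]
        linarith [hC 0]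
  | succ n ih =>
    intro T U hd
    rw [R_succ, R_succ, R_succ]
    have h0 : Q C n (T ∪ U) ≤ Q C n T + Q C n U := by
      unfold Q
      rw [btail_union, btail_union]
      have h1 := ih _ _ (btail_disjoint false hd)
      have h2 := ih _ _ (btail_disjoint true hd)
      linarith
    calc ser (C (n+1)) (Q C n (T ∪ U)) ≤ ser (C (n+1)) (Q C n T + Q C n U) :=
          ser_mono (hC (n+1)) (Q_nonneg hC n _) h0
      _ ≤ _ := ser_subadd (hC (n+1)) (Q_nonneg hC n _) (Q_nonneg hC n _)

lemma Q_subadd (hC : ∀ k, 0 < C k) (n : ℕ) (T U : Finset (Leaf (n+1)))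
    (hd : Disjoint T U) : Q C n (T ∪ U) ≤ Q C n T + Q C n U := by
  unfold Q
  rw [btail_union, btail_union]
  have h1 := R_subadd hC n _ _ (btail_disjoint false hd)
  have h2 := R_subadd hC n _ _ (btail_disjoint true hd)
  linarith

lemma btail_empty_of {n : ℕ} {T : Finset (Leaf (n+1))} {c : Bool}
    (h : ∀ u ∈ T, u 0 ≠ c) : btail c T = ∅ := by
  ext w
  simp only [mem_btail, Finset.notMem_empty, iff_false]
  intro hmem
  exact h _ hmem (by simp)

/-- The key transfer lemma: a branch-compatible more-clustered bijection descends
to the tails. -/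
lemma btail_moreClustered {n : ℕ} {T U : Finset (Leaf (n+1))} {σ : Leaf (n+1) → Leaf (n+1)}
    (hmaps : Set.MapsTo σ ↑T ↑U) (hinj : Set.InjOn σ ↑T)
    (hm : ∀ u ∈ T, ∀ v ∈ T, meetAge u v ≤ meetAge (σ u) (σ v))
    (b c : Bool)
    (hbc : ∀ u ∈ T, u 0 = b → (σ u) 0 = c)
    (hcb : ∀ u ∈ T, (σ u) 0 = c → u 0 = b)
    (hsurj : ∀ x ∈ U, x 0 = c → ∃ u ∈ T, σ u = x) :
    MoreClustered (btail b T) (btail c U) := by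
  refine ⟨fun w => Fin.tail (σ (Fin.cons b w)), ⟨?_, ?_, ?_⟩, ?_⟩
  · intro w hw
    have hcons : (Fin.cons b w : Leaf (n+1)) ∈ T := mem_btail.1 (Finset.mem_coe.1 hw)
    have hc : (σ (Fin.cons b w)) 0 = c := hbc _ hcons (by simp)
    have hU : σ (Fin.cons b w) ∈ U := hmaps hcons
    refine Finset.mem_coe.2 (mem_btail.2 ?_)
    rwa [← hc, Fin.cons_self_tail]
  · intro w hw w' hw' heq0
    have heq : Fin.tail (σ (Fin.cons b w)) = Fin.tail (σ (Fin.cons b w')) := heq0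
    have hcons : (Fin.cons b w : Leaf (n+1)) ∈ T := mem_btail.1 (Finset.mem_coe.1 hw)
    have hcons' : (Fin.cons b w' : Leaf (n+1)) ∈ T := mem_btail.1 (Finset.mem_coe.1 hw')
    have hc : (σ (Fin.cons b w)) 0 = c := hbc _ hcons (by simp)
    have hc' : (σ (Fin.cons b w')) 0 = c := hbc _ hcons' (by simp)
    have hσeq : σ (Fin.cons b w) = σ (Fin.cons b w') := by
      rw [← Fin.cons_self_tail (σ (Fin.cons b w)), ← Fin.cons_self_tail (σ (Fin.cons b w'))]
      rw [hc, hc', heq]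
    have := hinj hcons hcons' hσeq
    have := congrArg Fin.tail this
    simpa [Fin.tail_cons] using this
  · intro x hx
    have hcons : (Fin.cons c x : Leaf (n+1)) ∈ U := mem_btail.1 (Finset.mem_coe.1 hx)
    obtain ⟨u, huT, hux⟩ := hsurj _ hcons (by simp)
    have hu0 : u 0 = b := hcb _ huT (by rw [hux]; simp)
    refine ⟨Fin.tail u, Finset.mem_coe.2 (mem_btail.2 ?_), ?_⟩
    · rwa [← hu0, Fin.cons_self_tail]
    · show Fin.tail (σ (Fin.cons b (Fin.tail u))) = x
      rw [← hu0, Fin.cons_self_tail, hux, Fin.tail_cons]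
  · intro w hw w' hw'
    show meetAge w w' ≤ meetAge (Fin.tail (σ (Fin.cons b w))) (Fin.tail (σ (Fin.cons b w')))
    have hcons : (Fin.cons b w : Leaf (n+1)) ∈ T := mem_btail.1 hw
    have hcons' : (Fin.cons b w' : Leaf (n+1)) ∈ T := mem_btail.1 hw'
    have hc : (σ (Fin.cons b w)) 0 = c := hbc _ hcons (by simp)
    have hc' : (σ (Fin.cons b w')) 0 = c := hbc _ hcons' (by simp)
    have h1 : meetAge w w' = meetAge (Fin.cons b w : Leaf (n+1)) (Fin.cons b w') :=
      (meetAge_cons b w w').symm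
    have h2 := hm _ hcons _ hcons'
    have h3 : meetAge (σ (Fin.cons b w)) (σ (Fin.cons b w'))
        = meetAge (Fin.tail (σ (Fin.cons b w))) (Fin.tail (σ (Fin.cons b w'))) := by
      conv_lhs => rw [← Fin.cons_self_tail (σ (Fin.cons b w)),
        ← Fin.cons_self_tail (σ (Fin.cons b w')), hc, hc']
      exact meetAge_cons c _ _
    omega

lemma Q_mono_of (hC : ∀ k, 0 < C k) {n : ℕ}
    (hR : ∀ T U : Finset (Leaf n), MoreClustered T U → R C n T ≤ R C n U)
    (T U : Finset (Leaf (n+1))) (h : MoreClustered T U) : Q C n T ≤ Q C n U := by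
  obtain ⟨σ, ⟨hmaps, hinj, hsurj⟩, hm⟩ := h
  have hsurj' : ∀ x ∈ U, ∃ u ∈ T, σ u = x := by
    intro x hx
    obtain ⟨u, hu, hux⟩ := hsurj (Finset.mem_coe.2 hx)
    exact ⟨u, Finset.mem_coe.1 hu, hux⟩
  have hsep : ∀ u ∈ T, ∀ v ∈ T, u 0 ≠ v 0 → (σ u) 0 ≠ (σ v) 0 := by
    intro u hu v hv hne heq
    have h1 : meetAge u v = n+1 := meetAge_head_ne hne
    have h2 : meetAge (σ u) (σ v) ≤ n := meetAge_head_eq_le heq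
    have := hm u hu v hv
    omega
  -- helper : one-branch case
  have onebranch : ∀ b : Bool, T.Nonempty → (∀ u ∈ T, u 0 = b) → Q C n T ≤ Q C n U := by
    intro b hTne hall
    have hQT : Q C n T = R C n (btail b T) + R C n (btail (!b) T) := by
      cases b <;> simp [Q] <;> ring
    have hbne : btail (!b) T = ∅ := btail_empty_of (fun u hu => by rw [hall u hu]; simp)
    rw [hQT, hbne, R_empty, add_zero]
    by_cases hUf : ∃ x ∈ U, x 0 = false
    · by_cases hUt : ∃ x ∈ U, x 0 = true
      · -- U splits into both branches: split T by image branch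
        set P : Bool → Finset (Leaf (n+1)) := fun γ => T.filter (fun u => (σ u) 0 = γ) with hP
        have hPsub : ∀ γ, P γ ⊆ T := fun γ => Finset.filter_subset _ _
        have hPmc : ∀ γ : Bool, MoreClustered (btail b (P γ)) (btail γ U) := by
          intro γ
          apply btail_moreClustered (σ := σ)
          · exact fun u hu => hmaps (hPsub γ (Finset.mem_coe.1 hu))
          · exact fun u hu v hv => hinj (hPsub γ (Finset.mem_coe.1 hu)) (hPsub γ (Finset.mem_coe.1 hv))
          · exact fun u hu v hv => hm u (hPsub γ hu) v (hPsub γ hv)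
          · exact fun u hu _ => (Finset.mem_filter.1 hu).2
          · exact fun u hu _ => hall u (hPsub γ hu)
          · intro x hx hx0
            obtain ⟨u, hu, rfl⟩ := hsurj' x hx
            exact ⟨u, Finset.mem_filter.2 ⟨hu, hx0⟩, rfl⟩
        have hpart : btail b (P false) ∪ btail b (P true) = btail b T := by
          ext w
          simp only [Finset.mem_union, mem_btail, hP, Finset.mem_filter]
          cases h : (σ (Fin.cons b w)) 0 <;> tauto
        have hdis : Disjoint (btail b (P false)) (btail b (P true)) := by
          rw [Finset.disjoint_left]
          intro w hw hw'
          have h1 := (Finset.mem_filter.1 (mem_btail.1 hw)).2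
          have h2 := (Finset.mem_filter.1 (mem_btail.1 hw')).2
          rw [h1] at h2
          exact Bool.false_ne_true h2
        calc R C n (btail b T) = R C n (btail b (P false) ∪ btail b (P true)) := by rw [hpart]
          _ ≤ R C n (btail b (P false)) + R C n (btail b (P true)) := R_subadd hC n _ _ hdis
          _ ≤ R C n (btail false U) + R C n (btail true U) :=
              add_le_add (hR _ _ (hPmc false)) (hR _ _ (hPmc true))
          _ = Q C n U := rfl
      · -- all of U in branch false
        have hallU : ∀ x ∈ U, x 0 = false := by
          intro x hx
          cases h : x 0
          · rfl
          · exact absurd ⟨x, hx, h⟩ hUt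
        have hmc : MoreClustered (btail b T) (btail false U) := by
          apply btail_moreClustered (σ := σ) hmaps hinj hm
          · exact fun u hu _ => hallU _ (hmaps (Finset.mem_coe.2 hu))
          · exact fun u hu _ => hall u hu
          · exact fun x hx _ => hsurj' x hx
        have hU1 : btail true U = ∅ := btail_empty_of (fun x hx h => by rw [hallU x hx] at h; simp at h)
        have : Q C n U = R C n (btail false U) := by simp [Q, hU1, R_empty]
        rw [this]
        exact hR _ _ hmc
    · by_cases hUt : ∃ x ∈ U, x 0 = true
      · have hallU : ∀ x ∈ U, x 0 = true := by
          intro x hx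
          cases h : x 0
          · exact absurd ⟨x, hx, h⟩ hUf
          · rfl
        have hmc : MoreClustered (btail b T) (btail true U) := by
          apply btail_moreClustered (σ := σ) hmaps hinj hm
          · exact fun u hu _ => hallU _ (hmaps (Finset.mem_coe.2 hu))
          · exact fun u hu _ => hall u hu
          · exact fun x hx _ => hsurj' x hx
        have hU1 : btail false U = ∅ := btail_empty_of (fun x hx h => by rw [hallU x hx] at h; simp at h)
        have : Q C n U = R C n (btail true U) := by simp [Q, hU1, R_empty]
        rw [this]
        exact hR _ _ hmc
      · -- U empty, but T nonempty: contradiction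
        obtain ⟨u, hu⟩ := hTne
        have hU : σ u ∈ U := hmaps (Finset.mem_coe.2 hu)
        cases h : (σ u) 0
        · exact absurd ⟨σ u, hU, h⟩ hUf
        · exact absurd ⟨σ u, hU, h⟩ hUt
  by_cases hTf : ∃ u ∈ T, u 0 = false
  · by_cases hTt : ∃ u ∈ T, u 0 = true
    · -- T splits into both branches
      obtain ⟨t0, ht0, ht0f⟩ := hTf
      obtain ⟨t1, ht1, ht1t⟩ := hTt
      have hne01 : (σ t0) 0 ≠ (σ t1) 0 :=
        hsep t0 ht0 t1 ht1 (by rw [ht0f, ht1t]; simp)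
      set β := (σ t0) 0 with hβ
      have claim1 : ∀ u ∈ T, u 0 = false → (σ u) 0 = β := by
        intro u hu h0
        by_contra hne
        have h2 : (σ u) 0 ≠ (σ t1) 0 := hsep u hu t1 ht1 (by rw [h0, ht1t]; simp)
        have : ∀ a b c : Bool, a ≠ b → c ≠ a → c ≠ b → False := by decide
        exact this β ((σ t1) 0) ((σ u) 0) hne01 hne h2
      have claim2 : ∀ u ∈ T, u 0 = true → (σ u) 0 = !β := by
        intro u hu h0
        have h2 : (σ u) 0 ≠ β := hsep u hu t0 ht0 (by rw [h0, ht0f]; simp)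
        revert h2
        cases ((σ u) 0) <;> cases β <;> decide
      have hcb1 : ∀ u ∈ T, (σ u) 0 = β → u 0 = false := by
        intro u hu h0
        by_contra hne
        have h1 : u 0 = true := by revert hne; cases (u 0) <;> decide
        have := claim2 u hu h1
        rw [this] at h0
        revert h0; cases β <;> decide
      have hcb2 : ∀ u ∈ T, (σ u) 0 = !β → u 0 = true := by
        intro u hu h0
        by_contra hne
        have h1 : u 0 = false := by revert hne; cases (u 0) <;> decide
        have := claim1 u hu h1
        rw [this] at h0
        revert h0; cases β <;> decide
      have hmc1 : MoreClustered (btail false T) (btail β U) :=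
        btail_moreClustered hmaps hinj hm false β claim1 hcb1
          (fun x hx _ => hsurj' x hx)
      have hmc2 : MoreClustered (btail true T) (btail (!β) U) :=
        btail_moreClustered hmaps hinj hm true (!β) claim2 hcb2
          (fun x hx _ => hsurj' x hx)
      have hQU : Q C n U = R C n (btail β U) + R C n (btail (!β) U) := by
        cases β <;> simp [Q] <;> ring
      rw [hQU]
      exact add_le_add (hR _ _ hmc1) (hR _ _ hmc2)
    · -- all of T has first coordinate false
      have hall : ∀ u ∈ T, u 0 = false := by
        intro u hu
        cases h : u 0
        · rfl
        · exact absurd ⟨u, hu, h⟩ hTt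
      obtain ⟨u, hu, _⟩ := hTf
      exact onebranch false ⟨u, hu⟩ hall
  · by_cases hTt : ∃ u ∈ T, u 0 = true
    · have hall : ∀ u ∈ T, u 0 = true := by
        intro u hu
        cases h : u 0
        · exact absurd ⟨u, hu, h⟩ hTf
        · rfl
      obtain ⟨u, hu, _⟩ := hTt
      exact onebranch true ⟨u, hu⟩ hall
    · -- T empty, hence U empty
      have hT : T = ∅ := by
        rw [Finset.eq_empty_iff_forall_notMem]
        intro u hu
        cases h : u 0
        · exact absurd ⟨u, hu, h⟩ hTf
        · exact absurd ⟨u, hu, h⟩ hTt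
      have hU : U = ∅ := by
        rw [Finset.eq_empty_iff_forall_notMem]
        intro x hx
        obtain ⟨u, hu, _⟩ := hsurj' x hx
        rw [hT] at hu
        exact absurd hu (Finset.notMem_empty u)
      rw [hT, hU]

lemma R_mono (hC : ∀ k, 0 < C k) : ∀ (n : ℕ) (T U : Finset (Leaf n)),
    MoreClustered T U → R C n T ≤ R C n U := by
  intro n
  induction n with
  | zero =>
    intro T U ⟨σ, ⟨hmaps, _, hsurj⟩, _⟩
    by_cases hT : T = ∅
    · have hU : U = ∅ := by
        rw [Finset.eq_empty_iff_forall_notMem]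
        intro x hx
        obtain ⟨u, hu, _⟩ := hsurj (Finset.mem_coe.2 hx)
        rw [hT] at hu
        exact absurd hu (Finset.notMem_empty u)
      rw [hT, hU]
    · have hU : U ≠ ∅ := by
        obtain ⟨u, hu⟩ := Finset.nonempty_iff_ne_empty.2 hT
        intro h
        have := hmaps (Finset.mem_coe.2 hu)
        rw [h] at this
        simpa using this
      rw [R, if_neg hT, R, if_neg hU]
  | succ n ih =>
    intro T U h
    rw [R_succ, R_succ]
    exact ser_mono (hC (n+1)) (Q_nonneg hC n _) (Q_mono_of hC ih T U h)

lemma Q_mono (hC : ∀ k, 0 < C k) {n : ℕ} (T U : Finset (Leaf (n+1)))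
    (h : MoreClustered T U) : Q C n T ≤ Q C n U :=
  Q_mono_of hC (R_mono hC n) T U h



lemma equiv_inv {n : ℕ} {A B : Finset (Leaf n)} (h : EquivClustered A B) :
    MoreClustered B A := by
  obtain ⟨σ, ⟨hmaps, hinj, hsurj⟩, hmeq⟩ := h
  classical
  set τ := Function.invFunOn σ ↑A with hτ
  have hτmem : ∀ x ∈ (B : Set (Leaf n)), τ x ∈ (A : Set (Leaf n)) ∧ σ (τ x) = x := by
    intro x hx
    obtain ⟨u, hu, hux⟩ := hsurj hx
    exact ⟨Function.invFunOn_mem ⟨u, hu, hux⟩, Function.invFunOn_eq ⟨u, hu, hux⟩⟩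
  refine ⟨τ, ⟨?_, ?_, ?_⟩, ?_⟩
  · intro x hx
    exact (hτmem x hx).1
  · intro x hx y hy hxy
    have h1 := hτmem x hx
    have h2 := hτmem y hy
    rw [← h1.2, ← h2.2, hxy]
  · intro a ha
    have h3 := hτmem (σ a) (hmaps ha)
    exact ⟨σ a, hmaps ha, hinj h3.1 ha h3.2⟩
  · intro x hx y hy
    have h1 := hτmem x (Finset.mem_coe.2 hx)
    have h2 := hτmem y (Finset.mem_coe.2 hy)
    have h3 := hmeq (τ x) (Finset.mem_coe.1 h1.1) (τ y) (Finset.mem_coe.1 h2.1)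
    rw [h1.2, h2.2] at h3
    exact h3.le

lemma equiv_fwd {n : ℕ} {A B : Finset (Leaf n)} (h : EquivClustered A B) :
    MoreClustered A B := by
  obtain ⟨σ, hbij, hmeq⟩ := h
  exact ⟨σ, hbij, fun u hu v hv => (hmeq u hu v hv).ge⟩

/-- Proposition 1.22: for positive conductances assigned by age, the
capacity `A ↦ CAP(A)` is a monotone clustering function on the leaves of `𝕋⁽ⁿ⁾`. -/
theorem stmt18 (C : ℕ → ℝ) (hC : ∀ k, 0 < C k) (n : ℕ) (hn : 1 ≤ n) :
    IsMonotoneClusteringFn (cap n C) := by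
  obtain ⟨m, rfl⟩ : ∃ m, n = m + 1 := ⟨n - 1, by omega⟩
  refine ⟨⟨?_, ?_⟩, ?_, ?_⟩
  · rw [cap_eq hC, Q_empty]
  · intro A B h
    rw [cap_eq hC, cap_eq hC]
    exact le_antisymm (Q_mono hC A B (equiv_fwd h)) (Q_mono hC B A (equiv_inv h))
  · intro A B h
    rw [cap_eq hC, cap_eq hC]
    exact Q_mono hC A B h
  · intro A B hd
    rw [cap_eq hC, cap_eq hC, cap_eq hC]
    exact Q_subadd hC m A B hd

end PWC
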